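/- The map that sends a k-linear map γ : Ω_1 → S (where Ω_1 is the k-span of x_2, …, x_q and S is the k-span of x_1², …, x_1^{n−1} in A_{q,n}) to the ideal of A_{q,n} generated by the elements x_2 − γ(x_2), …, x_q − γ(x_q) is injective, and its image is exactly the orbit {σ(q_1) : σ ∈ I_{q,n}} of the ideal q_1 under the group of linearly trivial automorphisms. In particular, Hom_k(Ω_1, S) is in natural bijection with the coset space I_{q,n}/(I_{q,n} ∩ G_1). -/

import Mathlib

set_option synthInstance.maxHeartbeats 400000
set_option maxHeartbeats 1600000

noncomputable section

/-- The ring of `n`-nil polynomials `A_{q,n} = k[x_1,…,x_q]/m_0^n`. -/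
abbrev Aqn (k : Type) [Field k] (q n : ℕ) : Type :=
  MvPolynomial (Fin q) k ⧸
    (Ideal.span (Set.range (MvPolynomial.X : Fin q → MvPolynomial (Fin q) k))) ^ n

/-- The image of the variable `x_i` in `A_{q,n}`. -/
def xA (k : Type) [Field k] (q n : ℕ) (i : Fin q) : Aqn k q n :=
  Ideal.Quotient.mk _ (MvPolynomial.X i)

/-- The maximal ideal `m` of `A_{q,n}` generated by `x_1, …, x_q`. -/
def mA (k : Type) [Field k] (q n : ℕ) : Ideal (Aqn k q n) :=
  Ideal.span (Set.range (xA k q n))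

/-- The ideal `q_1` of `A_{q,n}` generated by `x_2, …, x_q`. -/
def q1A (k : Type) [Field k] (q n : ℕ) [NeZero q] : Ideal (Aqn k q n) :=
  Ideal.span {y | ∃ i : Fin q, i ≠ 0 ∧ y = xA k q n i}

/-- The `k`-linear span `Ω_1` of `x_2, …, x_q` in `A_{q,n}`. -/
def Omega1A (k : Type) [Field k] (q n : ℕ) [NeZero q] : Submodule k (Aqn k q n) :=
  Submodule.span k {y | ∃ i : Fin q, i ≠ 0 ∧ y = xA k q n i}

/-- The `k`-linear span `S` of `x_1², …, x_1^(n-1)` in `A_{q,n}`. -/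
def SA (k : Type) [Field k] (q n : ℕ) [NeZero q] : Submodule k (Aqn k q n) :=
  Submodule.span k {y | ∃ j : ℕ, 2 ≤ j ∧ j ≤ n - 1 ∧ y = xA k q n 0 ^ j}

/-- The map sending a `k`-linear map `γ : Ω_1 → S` to the ideal of `A_{q,n}` generated by
the elements `x_i - γ(x_i)`, `i = 2, …, q`. -/
def idealOfGamma (k : Type) [Field k] (q n : ℕ) [NeZero q]
    (γ : Omega1A k q n →ₗ[k] SA k q n) : Ideal (Aqn k q n) :=
  Ideal.span {y | ∃ i : {i : Fin q // i ≠ 0},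
    y = xA k q n i.1 - (γ ⟨xA k q n i.1, Submodule.subset_span ⟨i.1, i.2, rfl⟩⟩ : Aqn k q n)}

namespace Step17

open MvPolynomial Ideal

variable (k : Type) [Field k] (q n : ℕ)

local notation "R" => MvPolynomial (Fin q) k
local notation "m₀" => Ideal.span (Set.range (MvPolynomial.X : Fin q → MvPolynomial (Fin q) k))
local notation "mk0" => Ideal.Quotient.mk ((Ideal.span (Set.range (MvPolynomial.X : Fin q → MvPolynomial (Fin q) k))) ^ n)

lemma m0_le_ker_cc : (m₀ : Ideal R) ≤ RingHom.ker MvPolynomial.constantCoeff := by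
  rw [Ideal.span_le]
  rintro y ⟨i, rfl⟩
  simp [RingHom.mem_ker]

lemma cc_zero_mem (p : R) (hp : MvPolynomial.constantCoeff p = 0) : p ∈ (m₀ : Ideal R) := by
  have key : ∀ p : R, p - MvPolynomial.C (MvPolynomial.constantCoeff p) ∈ (m₀ : Ideal R) := by
    intro p
    induction p using MvPolynomial.induction_on with
    | C a => simp
    | add p r hp hr =>
        have := Submodule.add_mem _ hp hr
        simpa [map_add, MvPolynomial.C_add, add_sub_add_comm] using this
    | mul_X p i hp =>
        have : MvPolynomial.constantCoeff (p * MvPolynomial.X i) = 0 := by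
          simp
        rw [this]
        simpa using Ideal.mul_mem_left _ p (Ideal.subset_span (Set.mem_range_self i))
  have := key p
  rwa [hp, map_zero, sub_zero] at this

lemma m0_ne_top : (m₀ : Ideal R) ≠ ⊤ := by
  intro h
  have : (1 : R) ∈ (m₀ : Ideal R) := h ▸ Submodule.mem_top
  have := m0_le_ker_cc k q this
  simp [RingHom.mem_ker] at this

variable {n}

lemma m0_pow_ne_top (hn : 1 ≤ n) : ((m₀ : Ideal R) ^ n) ≠ ⊤ := by
  intro h
  exact m0_ne_top k q (top_le_iff.mp (h ▸ Ideal.pow_le_self (by omega)))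

lemma aqn_nontrivial (hn : 1 ≤ n) : Nontrivial (Aqn k q n) :=
  Ideal.Quotient.nontrivial_iff.mpr (m0_pow_ne_top k q hn)

variable (n)

lemma mA_eq_map : mA k q n = Ideal.map mk0 m₀ := by
  rw [mA, Ideal.map_span, ← Set.range_comp]
  rfl

lemma mA_pow_n : (mA k q n) ^ n = ⊥ := by
  rw [mA_eq_map, ← Ideal.map_pow, Ideal.map_quotient_self]

lemma xA_mem_mA (i : Fin q) : xA k q n i ∈ mA k q n :=
  Ideal.subset_span (Set.mem_range_self i)

lemma exists_decomp (a : Aqn k q n) :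
    ∃ (c : k) (z : Aqn k q n), z ∈ mA k q n ∧ a = algebraMap k _ c + z := by
  obtain ⟨p, rfl⟩ := Ideal.Quotient.mk_surjective a
  refine ⟨MvPolynomial.constantCoeff p, mk0 (p - MvPolynomial.C (MvPolynomial.constantCoeff p)),
    ?_, ?_⟩
  · rw [mA_eq_map]
    refine Ideal.mem_map_of_mem _ ?_
    have h : MvPolynomial.constantCoeff (p - MvPolynomial.C (MvPolynomial.constantCoeff p)) = 0 := by
      simp
    exact cc_zero_mem k q _ h
  · have : (algebraMap k (Aqn k q n)) (MvPolynomial.constantCoeff p)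
        = mk0 (MvPolynomial.C (MvPolynomial.constantCoeff p)) := rfl
    rw [this, ← map_add]
    congr 1
    ring

lemma mem_mA_isNilpotent {a : Aqn k q n} (ha : a ∈ mA k q n) : IsNilpotent a := by
  refine ⟨n, ?_⟩
  have : a ^ n ∈ (mA k q n) ^ n := Ideal.pow_mem_pow ha n
  rwa [mA_pow_n, Ideal.mem_bot] at this

lemma mA_eq_nilradical (hn : 1 ≤ n) : mA k q n = nilradical (Aqn k q n) := by
  have hnt := aqn_nontrivial k q hn
  refine le_antisymm (fun a ha => mem_mA_isNilpotent k q n ha) ?_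
  intro a ha
  obtain ⟨c, z, hz, rfl⟩ := exists_decomp k q n a
  rcases eq_or_ne c 0 with rfl | hc
  · simpa using hz
  · exfalso
    have hz' : IsNilpotent z := mem_mA_isNilpotent k q n hz
    have hcz : IsNilpotent (algebraMap k (Aqn k q n) c) := by
      have : (algebraMap k (Aqn k q n) c) = (algebraMap k _ c + z) - z := by ring
      rw [this]
      have h1 : algebraMap k (Aqn k q n) c + z ∈ nilradical (Aqn k q n) := mem_nilradical.mpr ha
      have h2 : z ∈ nilradical (Aqn k q n) := mem_nilradical.mpr hz'
      exact mem_nilradical.mp (Submodule.sub_mem _ h1 h2)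
    have hu : IsUnit (algebraMap k (Aqn k q n) c) := (Ne.isUnit hc).map (algebraMap k (Aqn k q n))
    exact hu.not_isNilpotent hcz

lemma xA_pow_n_eq_zero (i : Fin q) : (xA k q n i) ^ n = 0 := by
  have : (xA k q n i) ^ n ∈ (mA k q n) ^ n := Ideal.pow_mem_pow (xA_mem_mA k q n i) n
  rwa [mA_pow_n, Ideal.mem_bot] at this

lemma xA_pow_eq_zero (i : Fin q) {l : ℕ} (hl : n ≤ l) : (xA k q n i) ^ l = 0 := by
  rw [← Nat.add_sub_cancel' hl, pow_add, xA_pow_n_eq_zero, zero_mul]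

/-- Descend an algebra map `MvPolynomial → Aqn` sending variables into `mA` to `Aqn`. -/
def descend (g : Fin q → Aqn k q n) (hg : ∀ i, g i ∈ mA k q n) : Aqn k q n →ₐ[k] Aqn k q n :=
  Ideal.Quotient.liftₐ _ (MvPolynomial.aeval g) (by
    intro p hp
    have h1 : Ideal.map (MvPolynomial.aeval g : R →ₐ[k] Aqn k q n).toRingHom (m₀ ^ n)
        ≤ (mA k q n) ^ n := by
      rw [Ideal.map_pow]
      refine Ideal.pow_right_mono ?_ n
      rw [Ideal.map_span]
      refine Ideal.span_le.mpr ?_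
      rintro y ⟨x, ⟨i, rfl⟩, rfl⟩
      simpa using hg i
    have : MvPolynomial.aeval g p ∈ (mA k q n) ^ n :=
      h1 (Ideal.mem_map_of_mem _ hp)
    rwa [mA_pow_n, Ideal.mem_bot] at this)

@[simp] lemma descend_x (g : Fin q → Aqn k q n) (hg : ∀ i, g i ∈ mA k q n) (i : Fin q) :
    descend k q n g hg (xA k q n i) = g i := by
  rw [descend, xA, Ideal.Quotient.liftₐ_apply]
  exact MvPolynomial.aeval_X g i

lemma algHom_ext' {f g : Aqn k q n →ₐ[k] Aqn k q n}
    (h : ∀ i, f (xA k q n i) = g (xA k q n i)) : f = g := by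
  refine Ideal.Quotient.algHom_ext k ?_
  exact MvPolynomial.algHom_ext fun i => h i

lemma cc_pderiv_mul_mul (j : Fin q) {w : R} (hw : w ∈ (m₀ : Ideal R) * (m₀ : Ideal R)) :
    MvPolynomial.constantCoeff (MvPolynomial.pderiv j w) = 0 := by
  refine Submodule.mul_induction_on hw ?_ ?_
  · intro a ha b hb
    have hca : MvPolynomial.constantCoeff a = 0 := m0_le_ker_cc k q ha
    have hcb : MvPolynomial.constantCoeff b = 0 := m0_le_ker_cc k q hb
    rw [MvPolynomial.pderiv_mul, map_add, _root_.map_mul, _root_.map_mul, hca, hcb]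
    ring
  · intro x y hx hy
    rw [map_add, map_add, hx, hy, add_zero]

variable {n}

lemma xA_linearIndependent (hn : 2 ≤ n) : LinearIndependent k (xA k q n) := by
  rw [Fintype.linearIndependent_iff]
  intro g hg j
  classical
  set p : R := ∑ i : Fin q, g i • MvPolynomial.X i with hp
  have hmk : mk0 p = 0 := by
    have hL : mk0 p = (Ideal.Quotient.mkₐ k (m₀ ^ n)).toLinearMap p := rfl
    rw [hL, hp, map_sum]
    rw [← hg]
    refine Finset.sum_congr rfl fun i _ => ?_
    rw [LinearMap.map_smul]
    rfl
  have hpmem : p ∈ (m₀ : Ideal R) ^ n := Ideal.Quotient.eq_zero_iff_mem.mp hmk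
  have hpmem2 : p ∈ (m₀ : Ideal R) * (m₀ : Ideal R) := by
    have := Ideal.pow_le_pow_right (I := (m₀ : Ideal R)) hn hpmem
    rwa [pow_two] at this
  have := cc_pderiv_mul_mul k q j hpmem2
  rw [hp, map_sum, map_sum] at this
  have heval : ∀ i : Fin q,
      MvPolynomial.constantCoeff (MvPolynomial.pderiv j (g i • MvPolynomial.X i : R))
        = if j = i then g i else 0 := by
    intro i
    rw [Derivation.map_smul, MvPolynomial.constantCoeff_smul, MvPolynomial.pderiv_X]
    rcases eq_or_ne j i with rfl | hne
    · simp [smul_eq_mul]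
    · simp [Pi.single_apply, hne, smul_eq_mul]
  rw [Finset.sum_congr rfl (fun i _ => heval i)] at this
  simpa using this

section Submod

variable (n) [NeZero q]

def q1A' : Ideal (Aqn k q n) :=
  Ideal.span {y | ∃ i : Fin q, i ≠ 0 ∧ y = xA k q n i}

/-- `T j` : the `k`-span of the powers `x₁^l`, `l ≥ j`. -/
def Tsub (j : ℕ) : Submodule k (Aqn k q n) :=
  Submodule.span k {w | ∃ l, j ≤ l ∧ w = xA k q n 0 ^ l}

/-- `QQ` : the ideal `m * q1` viewed as `k`-submodule. -/
def QQ : Submodule k (Aqn k q n) :=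
  Submodule.restrictScalars k (mA k q n * q1A' k q n)

lemma Tsub_mono {j j' : ℕ} (h : j ≤ j') : Tsub k q n j' ≤ Tsub k q n j := by
  refine Submodule.span_mono ?_
  rintro w ⟨l, hl, rfl⟩
  exact ⟨l, le_trans h hl, rfl⟩

lemma pow_mem_Tsub {j l : ℕ} (h : j ≤ l) : xA k q n 0 ^ l ∈ Tsub k q n j :=
  Submodule.subset_span ⟨l, h, rfl⟩

omit [NeZero q] in
lemma pow_mem_mA {l : ℕ} (hl : 1 ≤ l) (i : Fin q) : xA k q n i ^ l ∈ mA k q n := by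
  rw [← Nat.succ_pred_eq_of_pos hl, pow_succ]
  exact Ideal.mul_mem_left _ _ (xA_mem_mA k q n i)

lemma xA_mem_q1 {i : Fin q} (hi : i ≠ 0) : xA k q n i ∈ q1A' k q n :=
  Ideal.subset_span ⟨i, hi, rfl⟩

lemma mul_mem_QQ {a : Aqn k q n} (ha : a ∈ mA k q n) {i : Fin q} (hi : i ≠ 0) :
    a * xA k q n i ∈ QQ k q n :=
  Ideal.mul_mem_mul ha (xA_mem_q1 k q n hi)

lemma QQ_mul_closed (a : Aqn k q n) {w : Aqn k q n} (hw : w ∈ QQ k q n) :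
    a * w ∈ QQ k q n :=
  Ideal.mul_mem_left _ a hw

lemma QQ_le_q1 : QQ k q n ≤ Submodule.restrictScalars k (q1A' k q n) :=
  fun _ h => Ideal.mul_le_right h

variable {n}

lemma AmulPow_aux (d : ℕ) : ∀ j, 1 ≤ j → n - j ≤ d → ∀ a : Aqn k q n,
    a * xA k q n 0 ^ j ∈ Tsub k q n j ⊔ QQ k q n := by
  induction d with
  | zero =>
      intro j hj hd a
      have hjn : n ≤ j := by omega
      rw [xA_pow_eq_zero k q n 0 hjn, mul_zero]
      exact Submodule.zero_mem _
  | succ d ih =>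
      intro j hj hd a
      by_cases hjn : n ≤ j
      · rw [xA_pow_eq_zero k q n 0 hjn, mul_zero]
        exact Submodule.zero_mem _
      -- auxiliary closure: multiplication preserves `Tsub j' ⊔ QQ` for j' > j
      have closure : ∀ j', j < j' → ∀ (a' : Aqn k q n) (w : Aqn k q n),
          w ∈ Tsub k q n j' ⊔ QQ k q n → a' * w ∈ Tsub k q n j' ⊔ QQ k q n := by
        intro j' hjj' a' w hw
        obtain ⟨t, ht, u, hu, rfl⟩ := Submodule.mem_sup.mp hw
        rw [mul_add]
        refine Submodule.add_mem _ ?_ (Submodule.mem_sup_right (QQ_mul_closed k q n a' hu))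
        refine Submodule.span_induction ?_ ?_ ?_ ?_ ht
        · rintro w ⟨l, hl, rfl⟩
          have hmem : a' * xA k q n 0 ^ l ∈ Tsub k q n l ⊔ QQ k q n :=
            ih l (by omega) (by omega) a'
          exact sup_le_sup (Tsub_mono k q n hl) le_rfl hmem
        · rw [mul_zero]; exact Submodule.zero_mem _
        · intro x y _ _ hx hy
          rw [mul_add]; exact Submodule.add_mem _ hx hy
        · intro c x _ hx
          rw [mul_smul_comm]; exact Submodule.smul_mem _ c hx
      obtain ⟨c, z, hz, rfl⟩ := exists_decomp k q n a
      rw [add_mul]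
      refine Submodule.add_mem _ ?_ ?_
      · rw [← Algebra.smul_def]
        exact Submodule.mem_sup_left (Submodule.smul_mem _ c (pow_mem_Tsub k q n le_rfl))
      · -- z * x^j ∈ T (j+1) ⊔ QQ ≤ T j ⊔ QQ
        refine sup_le_sup (Tsub_mono k q n (Nat.le_succ j)) le_rfl ?_
        refine Submodule.span_induction ?_ ?_ ?_ ?_ hz
        · rintro w ⟨i, rfl⟩ 
          by_cases hi : i = 0
          · subst hi
            rw [← pow_succ']
            exact Submodule.mem_sup_left (pow_mem_Tsub k q n le_rfl)
          · rw [mul_comm]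
            exact Submodule.mem_sup_right
              (mul_mem_QQ k q n (pow_mem_mA k q n hj 0) hi)
        · rw [zero_mul]; exact Submodule.zero_mem _
        · intro x y _ _ hx hy
          rw [add_mul]; exact Submodule.add_mem _ hx hy
        · intro a' x _ hx
          rw [smul_eq_mul, mul_assoc]
          exact closure (j + 1) (by omega) a' _ hx

lemma AmulPow {j : ℕ} (hj : 1 ≤ j) (a : Aqn k q n) :
    a * xA k q n 0 ^ j ∈ Tsub k q n j ⊔ QQ k q n :=
  AmulPow_aux k q (n - j) j hj le_rfl a

lemma mulTQ {j : ℕ} (hj : 1 ≤ j) (a : Aqn k q n) {w : Aqn k q n}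
    (hw : w ∈ Tsub k q n j ⊔ QQ k q n) : a * w ∈ Tsub k q n j ⊔ QQ k q n := by
  obtain ⟨t, ht, u, hu, rfl⟩ := Submodule.mem_sup.mp hw
  rw [mul_add]
  refine Submodule.add_mem _ ?_ (Submodule.mem_sup_right (QQ_mul_closed k q n a hu))
  refine Submodule.span_induction ?_ ?_ ?_ ?_ ht
  · rintro w ⟨l, hl, rfl⟩
    exact sup_le_sup (Tsub_mono k q n hl) le_rfl (AmulPow k q (le_trans hj hl) a)
  · rw [mul_zero]; exact Submodule.zero_mem _
  · intro x y _ _ hx hy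
    rw [mul_add]; exact Submodule.add_mem _ hx hy
  · intro c x _ hx
    rw [mul_smul_comm]; exact Submodule.smul_mem _ c hx

lemma mem_mA_mul_x1 {a : Aqn k q n} (ha : a ∈ mA k q n) :
    a * xA k q n 0 ∈ Tsub k q n 2 ⊔ QQ k q n := by
  refine Submodule.span_induction ?_ ?_ ?_ ?_ ha
  · rintro w ⟨i, rfl⟩
    by_cases hi : i = 0
    · subst hi
      rw [← pow_two]
      exact Submodule.mem_sup_left (pow_mem_Tsub k q n le_rfl)
    · rw [mul_comm]
      exact Submodule.mem_sup_right (mul_mem_QQ k q n (xA_mem_mA k q n 0) hi)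
  · rw [zero_mul]; exact Submodule.zero_mem _
  · intro x y _ _ hx hy
    rw [add_mul]; exact Submodule.add_mem _ hx hy
  · intro a' x _ hx
    rw [smul_eq_mul, mul_assoc]
    exact mulTQ k q (by norm_num) a' hx

lemma mem_mA_mul_mem_mA {a b : Aqn k q n} (ha : a ∈ mA k q n) (hb : b ∈ mA k q n) :
    a * b ∈ Tsub k q n 2 ⊔ QQ k q n := by
  refine Submodule.span_induction (p := fun b _ => ∀ a ∈ mA k q n,
    a * b ∈ Tsub k q n 2 ⊔ QQ k q n) ?_ ?_ ?_ ?_ hb a ha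
  · rintro w ⟨i, rfl⟩ a ha
    show a * xA k q n i ∈ _
    by_cases hi : i = 0
    · subst hi; exact mem_mA_mul_x1 k q ha
    · exact Submodule.mem_sup_right (mul_mem_QQ k q n ha hi)
  · intro a _; show a * 0 ∈ _; rw [mul_zero]; exact Submodule.zero_mem _
  · intro x y hx' hy' hx hy a ha
    show a * (x + y) ∈ _
    have hx : a * x ∈ Tsub k q n 2 ⊔ QQ k q n := hx a ha
    have hy : a * y ∈ Tsub k q n 2 ⊔ QQ k q n := hy a ha
    rw [mul_add]; exact Submodule.add_mem _ hx hy
  · intro a' x hx' hx a ha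
    show a * (a' • x) ∈ _
    have hx : a * x ∈ Tsub k q n 2 ⊔ QQ k q n := hx a ha
    rw [smul_eq_mul, mul_left_comm]
    exact mulTQ k q (by norm_num) a' hx

lemma powLe : ∀ j, 2 ≤ j → ∀ z ∈ (mA k q n) ^ j, z ∈ Tsub k q n j ⊔ QQ k q n := by
  intro j hj
  induction j, hj using Nat.le_induction with
  | base =>
      intro z hz
      rw [show mA k q n ^ 2 = mA k q n * mA k q n from pow_two _] at hz
      exact Submodule.mul_induction_on hz
        (fun a ha b hb => mem_mA_mul_mem_mA k q ha hb)
        (fun x y hx hy => Submodule.add_mem _ hx hy)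
  | succ j hj ih =>
      intro z hz
      rw [Submodule.pow_succ] at hz
      refine Submodule.mul_induction_on hz ?_ (fun x y hx hy => Submodule.add_mem _ hx hy)
      intro a ha b hb
      have haT := ih a ha
      obtain ⟨t, ht, u, hu, rfl⟩ := Submodule.mem_sup.mp haT
      rw [add_mul]
      refine Submodule.add_mem _ ?_ ?_
      · refine Submodule.span_induction (p := fun t _ =>
          t * b ∈ Tsub k q n (j+1) ⊔ QQ k q n) ?_ ?_ ?_ ?_ ht
        · rintro w ⟨l, hl, rfl⟩
          refine Submodule.span_induction (p := fun b _ =>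
            xA k q n 0 ^ l * b ∈ Tsub k q n (j+1) ⊔ QQ k q n) ?_ ?_ ?_ ?_ hb
          · rintro w ⟨i, rfl⟩
            show xA k q n 0 ^ l * xA k q n i ∈ _
            by_cases hi : i = 0
            · subst hi
              rw [← pow_succ]
              exact Submodule.mem_sup_left (pow_mem_Tsub k q n (by omega))
            · exact Submodule.mem_sup_right
                (mul_mem_QQ k q n (pow_mem_mA k q n (by omega) 0) hi)
          · show xA k q n 0 ^ l * 0 ∈ _
            rw [mul_zero]; exact Submodule.zero_mem _
          · intro x y hx' hy' hx hy
            show xA k q n 0 ^ l * (x + y) ∈ _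
            have hx : xA k q n 0 ^ l * x ∈ Tsub k q n (j+1) ⊔ QQ k q n := hx
            have hy : xA k q n 0 ^ l * y ∈ Tsub k q n (j+1) ⊔ QQ k q n := hy
            rw [mul_add]; exact Submodule.add_mem _ hx hy
          · intro a' x hx' hx
            show xA k q n 0 ^ l * (a' • x) ∈ _
            have hx : xA k q n 0 ^ l * x ∈ Tsub k q n (j+1) ⊔ QQ k q n := hx
            rw [smul_eq_mul, mul_left_comm]
            exact mulTQ k q (by omega) a' hx
        · show (0 : Aqn k q n) * b ∈ _
          rw [zero_mul]; exact Submodule.zero_mem _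
        · intro x y hx' hy' hx hy
          show (x + y) * b ∈ _
          have hx : x * b ∈ Tsub k q n (j+1) ⊔ QQ k q n := hx
          have hy : y * b ∈ Tsub k q n (j+1) ⊔ QQ k q n := hy
          rw [add_mul]; exact Submodule.add_mem _ hx hy
        · intro c x hx' hx
          show (c • x) * b ∈ _
          have hx : x * b ∈ Tsub k q n (j+1) ⊔ QQ k q n := hx
          rw [smul_mul_assoc]; exact Submodule.smul_mem _ c hx
      · exact Submodule.mem_sup_right (by
          rw [mul_comm]; exact QQ_mul_closed k q n b hu)

lemma nakayama (I : Ideal (Aqn k q n)) (h : q1A' k q n ≤ I ⊔ mA k q n * q1A' k q n) :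
    q1A' k q n ≤ I := by
  have key : ∀ d : ℕ, q1A' k q n ≤ I ⊔ (mA k q n) ^ d * q1A' k q n := by
    intro d
    induction d with
    | zero => rw [Submodule.pow_zero, Submodule.one_mul]; exact le_sup_right
    | succ d ih =>
        refine le_trans ih (sup_le le_sup_left ?_)
        have step : (mA k q n) ^ d * q1A' k q n ≤
            (mA k q n) ^ d * (I ⊔ mA k q n * q1A' k q n) :=
          Ideal.mul_mono_right h
        refine le_trans step ?_
        rw [Ideal.mul_sup]
        refine sup_le (le_trans Ideal.mul_le_right le_sup_left) ?_
        rw [← mul_assoc, ← Submodule.pow_succ]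
        exact le_sup_right
  have := key n
  rwa [mA_pow_n, bot_mul, sup_bot_eq] at this

section Ypow

variable (n) {y : Aqn k q n}

lemma y_mem_mA (hy : y - xA k q n 0 ∈ (mA k q n) ^ 2) : y ∈ mA k q n := by
  have h2 : y - xA k q n 0 ∈ mA k q n := Ideal.pow_le_self (by norm_num) hy
  have := Submodule.add_mem _ h2 (xA_mem_mA k q n 0)
  simpa using this

lemma ypow_sub_pow_mem (hy : y - xA k q n 0 ∈ (mA k q n) ^ 2) (j : ℕ) :
    y ^ j - xA k q n 0 ^ j ∈ (mA k q n) ^ (j + 1) := by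
  induction j with
  | zero => simpa using Submodule.zero_mem _
  | succ j ih =>
      have key : y ^ (j+1) - xA k q n 0 ^ (j+1)
          = y * (y ^ j - xA k q n 0 ^ j) + (y - xA k q n 0) * xA k q n 0 ^ j := by
        ring
      rw [key]
      refine Submodule.add_mem _ ?_ ?_
      · have : y * (y ^ j - xA k q n 0 ^ j) ∈ mA k q n * (mA k q n) ^ (j + 1) :=
          Ideal.mul_mem_mul (y_mem_mA k q n hy) ih
        rwa [← Submodule.pow_succ' (h := Nat.succ_ne_zero j)] at this
      · rcases Nat.eq_zero_or_pos j with rfl | hj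
        · rw [pow_zero, mul_one]
          rw [show (0:ℕ) + 1 + 1 = 2 from rfl]
          exact hy
        · have : (y - xA k q n 0) * xA k q n 0 ^ j ∈ (mA k q n) ^ 2 * (mA k q n) ^ j :=
            Ideal.mul_mem_mul hy (Ideal.pow_mem_pow (xA_mem_mA k q n 0) j)
          rwa [← pow_add, show 2 + j = j + 1 + 1 by omega] at this

/-- `YT j` : the `k`-span of `y^l`, `j ≤ l ≤ n-1`. -/
def YTsub (y : Aqn k q n) (j : ℕ) : Submodule k (Aqn k q n) :=
  Submodule.span k {w | ∃ l, j ≤ l ∧ l ≤ n - 1 ∧ w = y ^ l}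

lemma YTsub_mono {j j' : ℕ} (h : j ≤ j') : YTsub k q n y j' ≤ YTsub k q n y j := by
  refine Submodule.span_mono ?_
  rintro w ⟨l, hl, hl', rfl⟩
  exact ⟨l, le_trans h hl, hl', rfl⟩

variable {n}

lemma x1pow_mem_YT_aux (hn : 2 ≤ n) (hy : y - xA k q n 0 ∈ (mA k q n) ^ 2) (d : ℕ) :
    ∀ j, 1 ≤ j → n - j ≤ d →
      xA k q n 0 ^ j ∈ YTsub k q n y j ⊔ Submodule.restrictScalars k (q1A' k q n) := by
  induction d with
  | zero =>
      intro j hj hd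
      rw [xA_pow_eq_zero k q n 0 (by omega)]
      exact Submodule.zero_mem _
  | succ d ih =>
      intro j hj hd
      by_cases hjn : n ≤ j
      · rw [xA_pow_eq_zero k q n 0 hjn]
        exact Submodule.zero_mem _
      have hyj : y ^ j ∈ YTsub k q n y j :=
        Submodule.subset_span ⟨j, le_rfl, by omega, rfl⟩
      have he : y ^ j - xA k q n 0 ^ j ∈ (mA k q n) ^ (j + 1) :=
        ypow_sub_pow_mem k q n hy j
      have heT : y ^ j - xA k q n 0 ^ j ∈ Tsub k q n (j+1) ⊔ QQ k q n :=
        powLe k q (j+1) (by omega) _ he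
      have hTle : Tsub k q n (j+1) ⊔ QQ k q n ≤
          YTsub k q n y j ⊔ Submodule.restrictScalars k (q1A' k q n) := by
        refine sup_le ?_ (le_trans (QQ_le_q1 k q n) le_sup_right)
        rw [Tsub]
        refine Submodule.span_le.mpr ?_
        rintro w ⟨l, hl, rfl⟩
        by_cases hln : n ≤ l
        · rw [xA_pow_eq_zero k q n 0 hln]
          exact Submodule.zero_mem _
        · have := ih l (by omega) (by omega)
          exact sup_le_sup (YTsub_mono k q n (by omega)) le_rfl this
      have : xA k q n 0 ^ j = y ^ j - (y ^ j - xA k q n 0 ^ j) := by ring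
      rw [this]
      exact Submodule.sub_mem _ (Submodule.mem_sup_left hyj) (hTle heT)

lemma x1pow_mem_YT (hn : 2 ≤ n) (hy : y - xA k q n 0 ∈ (mA k q n) ^ 2) {j : ℕ} (hj : 1 ≤ j) :
    xA k q n 0 ^ j ∈ YTsub k q n y j ⊔ Submodule.restrictScalars k (q1A' k q n) :=
  x1pow_mem_YT_aux k q hn hy (n - j) j hj le_rfl

end Ypow
end Submod

end Step17

namespace Step17
open MvPolynomial Ideal
variable (k : Type) [Field k] (q n : ℕ) [NeZero q]
section Gamma

variable {n} (hn : 2 ≤ n)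

lemma q1A'_eq : q1A' k q n = q1A k q n := rfl

lemma SA_eq_span : SA k q n = Submodule.span k
    {y | ∃ j : ℕ, 2 ≤ j ∧ j ≤ n - 1 ∧ y = xA k q n 0 ^ j} := rfl

lemma Tsub2_eq_SA : Tsub k q n 2 = SA k q n := by
  rw [SA_eq_span, Tsub]
  refine le_antisymm ?_ ?_
  · refine Submodule.span_le.mpr ?_
    rintro w ⟨l, hl, rfl⟩
    by_cases hln : l ≤ n - 1
    · exact Submodule.subset_span ⟨l, hl, hln, rfl⟩
    · rw [xA_pow_eq_zero k q n 0 (by omega)]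
      exact Submodule.zero_mem _
  · refine Submodule.span_le.mpr ?_
    rintro w ⟨l, hl, _, rfl⟩
    exact Submodule.subset_span ⟨l, hl, rfl⟩

lemma SA_le_mA : SA k q n ≤ Submodule.restrictScalars k (mA k q n) := by
  rw [SA_eq_span]
  refine Submodule.span_le.mpr ?_
  rintro w ⟨l, hl, _, rfl⟩
  exact pow_mem_mA k q n (by omega) 0

lemma SA_le_mA2 : SA k q n ≤ Submodule.restrictScalars k ((mA k q n) ^ 2) := by
  rw [SA_eq_span]
  refine Submodule.span_le.mpr ?_
  rintro w ⟨l, hl, _, rfl⟩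
  have : xA k q n 0 ^ l ∈ (mA k q n) ^ l := Ideal.pow_mem_pow (xA_mem_mA k q n 0) l
  exact Ideal.pow_le_pow_right hl this

/-- any algebra endomorphism fixing `x₁` fixes `S` pointwise. -/
lemma fix_SA {Φ : Aqn k q n →ₐ[k] Aqn k q n} (hΦ : Φ (xA k q n 0) = xA k q n 0)
    {s : Aqn k q n} (hs : s ∈ SA k q n) : Φ s = s := by
  rw [SA_eq_span] at hs
  refine Submodule.span_induction ?_ ?_ ?_ ?_ hs
  · rintro w ⟨l, _, _, rfl⟩
    rw [map_pow, hΦ]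
  · exact map_zero Φ
  · intro a b _ _ ha hb
    rw [map_add, ha, hb]
  · intro c a _ ha
    rw [map_smul, ha]

/-- the value of `γ` at the generator `x_i`. -/
def gval (γ : Omega1A k q n →ₗ[k] SA k q n) (i : Fin q) : Aqn k q n :=
  if h : i = 0 then xA k q n 0
  else (γ ⟨xA k q n i, Submodule.subset_span ⟨i, h, rfl⟩⟩ : Aqn k q n)

lemma gval_mem_mA (γ : Omega1A k q n →ₗ[k] SA k q n) (i : Fin q) :
    gval k q γ i ∈ mA k q n := by
  rw [gval]
  split
  · exact xA_mem_mA k q n 0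
  · exact SA_le_mA k q (Subtype.coe_prop _)

/-- the retraction `ψ_γ : A → A`, `x₁ ↦ x₁`, `x_i ↦ γ(x_i)`. -/
def psiG (γ : Omega1A k q n →ₗ[k] SA k q n) : Aqn k q n →ₐ[k] Aqn k q n :=
  descend k q n (gval k q γ) (gval_mem_mA k q γ)

lemma psiG_x1 (γ : Omega1A k q n →ₗ[k] SA k q n) :
    psiG k q γ (xA k q n 0) = xA k q n 0 := by
  rw [psiG, descend_x, gval, dif_pos rfl]

lemma psiG_fix_SA (γ : Omega1A k q n →ₗ[k] SA k q n) {s : Aqn k q n} (hs : s ∈ SA k q n) :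
    psiG k q γ s = s :=
  fix_SA k q (psiG_x1 k q γ) hs

lemma psiG_kill (γ : Omega1A k q n →ₗ[k] SA k q n) {a : Aqn k q n}
    (ha : a ∈ idealOfGamma k q n γ) : psiG k q γ a = 0 := by
  have hker : idealOfGamma k q n γ ≤ RingHom.ker (psiG k q γ : Aqn k q n →+* Aqn k q n) := by
    refine Ideal.span_le.mpr ?_
    rintro w ⟨i, rfl⟩
    rw [SetLike.mem_coe, RingHom.mem_ker]
    have h1 : psiG k q γ (xA k q n i.1) = gval k q γ i.1 := by
      rw [psiG, descend_x]
    have h2 : gval k q γ i.1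
        = (γ ⟨xA k q n i.1, Submodule.subset_span ⟨i.1, i.2, rfl⟩⟩ : Aqn k q n) := by
      rw [gval, dif_neg i.2]
    rw [RingHom.coe_coe, map_sub, h1, h2, psiG_fix_SA k q γ (Subtype.coe_prop _), sub_self]
  exact hker ha

/-- `S ∩ idealOfGamma γ = 0`. -/
lemma SA_inter_idealOfGamma (γ : Omega1A k q n →ₗ[k] SA k q n) {s : Aqn k q n}
    (hs : s ∈ SA k q n) (hs' : s ∈ idealOfGamma k q n γ) : s = 0 := by
  have h1 := psiG_fix_SA k q γ hs
  have h2 := psiG_kill k q γ hs'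
  rw [h1] at h2
  exact h2

lemma q1A_eq_idealOfGamma_zero : q1A k q n = idealOfGamma k q n 0 := by
  rw [q1A, idealOfGamma]
  congr 1
  ext y
  constructor
  · rintro ⟨i, hi, rfl⟩
    exact ⟨⟨i, hi⟩, by simp⟩
  · rintro ⟨i, rfl⟩
    exact ⟨i.1, i.2, by simp⟩

lemma SA_inter_q1A {s : Aqn k q n} (hs : s ∈ SA k q n) (hs' : s ∈ q1A k q n) : s = 0 :=
  SA_inter_idealOfGamma k q 0 hs (q1A_eq_idealOfGamma_zero k q ▸ hs')

end Gamma

section Basis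

def vfam : {i : Fin q // i ≠ 0} → Aqn k q n := fun i => xA k q n i.1

variable {n}

lemma omega_eq : Omega1A k q n = Submodule.span k (Set.range (vfam k q n)) := by
  rw [Omega1A]
  congr 1
  ext y
  constructor
  · rintro ⟨i, hi, rfl⟩
    exact ⟨⟨i, hi⟩, rfl⟩
  · rintro ⟨i, rfl⟩
    exact ⟨i.1, i.2, rfl⟩

lemma vfam_li (hn : 2 ≤ n) : LinearIndependent k (vfam k q n) :=
  (xA_linearIndependent k q hn).comp Subtype.val Subtype.val_injective

def basisOmega (hn : 2 ≤ n) : Module.Basis {i : Fin q // i ≠ 0} k (Omega1A k q n) :=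
  (Module.Basis.span (vfam_li k q hn)).map (LinearEquiv.ofEq _ _ (omega_eq k q).symm)

lemma basisOmega_coe (hn : 2 ≤ n) (i : {i : Fin q // i ≠ 0}) :
    (basisOmega k q hn i : Aqn k q n) = xA k q n i.1 := by
  rw [basisOmega, Module.Basis.map_apply]
  have h1 : ((LinearEquiv.ofEq _ _ (omega_eq k q).symm) (Module.Basis.span (vfam_li k q hn) i)
      : Aqn k q n) = ((Module.Basis.span (vfam_li k q hn) i : Aqn k q n)) := rfl
  rw [h1, Module.Basis.span_apply]
  rfl

lemma basisOmega_eq (hn : 2 ≤ n) (i : {i : Fin q // i ≠ 0}) :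
    basisOmega k q hn i
      = ⟨xA k q n i.1, Submodule.subset_span ⟨i.1, i.2, rfl⟩⟩ :=
  Subtype.ext (basisOmega_coe k q hn i)

lemma gen_mem_idealOfGamma (γ : Omega1A k q n →ₗ[k] SA k q n) (i : {i : Fin q // i ≠ 0}) :
    xA k q n i.1 - (γ ⟨xA k q n i.1, Submodule.subset_span ⟨i.1, i.2, rfl⟩⟩ : Aqn k q n)
      ∈ idealOfGamma k q n γ :=
  Ideal.subset_span ⟨i, rfl⟩

lemma idealOfGamma_inj (hn : 2 ≤ n) : Function.Injective (idealOfGamma k q n) := by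
  intro γ γ' h
  refine (basisOmega k q hn).ext fun i => ?_
  refine Subtype.ext ?_
  have hmemγ := gen_mem_idealOfGamma k q γ i
  have hmemγ' := gen_mem_idealOfGamma k q γ' i
  rw [← h] at hmemγ'
  have hdiff : (γ' ⟨xA k q n i.1, Submodule.subset_span ⟨i.1, i.2, rfl⟩⟩ : Aqn k q n)
      - (γ ⟨xA k q n i.1, Submodule.subset_span ⟨i.1, i.2, rfl⟩⟩ : Aqn k q n)
      ∈ idealOfGamma k q n γ := by
    have := Submodule.sub_mem _ hmemγ hmemγ'
    simpa using this
  have hS : (γ' ⟨xA k q n i.1, Submodule.subset_span ⟨i.1, i.2, rfl⟩⟩ : Aqn k q n)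
      - (γ ⟨xA k q n i.1, Submodule.subset_span ⟨i.1, i.2, rfl⟩⟩ : Aqn k q n) ∈ SA k q n :=
    Submodule.sub_mem _ (Subtype.coe_prop _) (Subtype.coe_prop _)
  have h0 := SA_inter_idealOfGamma k q γ hS hdiff
  rw [basisOmega_eq k q hn i]
  have : (γ' ⟨xA k q n i.1, Submodule.subset_span ⟨i.1, i.2, rfl⟩⟩ : Aqn k q n)
      = (γ ⟨xA k q n i.1, Submodule.subset_span ⟨i.1, i.2, rfl⟩⟩ : Aqn k q n) := by
    have := sub_eq_zero.mp h0
    exact this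
  exact this.symm

end Basis

section Sigma

variable {n}

def gm (γ : Omega1A k q n →ₗ[k] SA k q n) : Fin q → Aqn k q n := fun i =>
  if i = 0 then xA k q n 0 else xA k q n i - gval k q γ i

def gp (γ : Omega1A k q n →ₗ[k] SA k q n) : Fin q → Aqn k q n := fun i =>
  if i = 0 then xA k q n 0 else xA k q n i + gval k q γ i

lemma gm_mem (γ : Omega1A k q n →ₗ[k] SA k q n) (i : Fin q) : gm k q γ i ∈ mA k q n := by
  rw [gm]; split
  · exact xA_mem_mA k q n 0
  · exact Submodule.sub_mem _ (xA_mem_mA k q n i) (gval_mem_mA k q γ i)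

lemma gp_mem (γ : Omega1A k q n →ₗ[k] SA k q n) (i : Fin q) : gp k q γ i ∈ mA k q n := by
  rw [gp]; split
  · exact xA_mem_mA k q n 0
  · exact Submodule.add_mem _ (xA_mem_mA k q n i) (gval_mem_mA k q γ i)

def sigmaHom (γ : Omega1A k q n →ₗ[k] SA k q n) : Aqn k q n →ₐ[k] Aqn k q n :=
  descend k q n (gm k q γ) (gm_mem k q γ)

def tauHom (γ : Omega1A k q n →ₗ[k] SA k q n) : Aqn k q n →ₐ[k] Aqn k q n :=
  descend k q n (gp k q γ) (gp_mem k q γ)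

lemma sigmaHom_x1 (γ : Omega1A k q n →ₗ[k] SA k q n) :
    sigmaHom k q γ (xA k q n 0) = xA k q n 0 := by
  rw [sigmaHom, descend_x, gm, if_pos rfl]

lemma tauHom_x1 (γ : Omega1A k q n →ₗ[k] SA k q n) :
    tauHom k q γ (xA k q n 0) = xA k q n 0 := by
  rw [tauHom, descend_x, gp, if_pos rfl]

lemma gval_mem_SA (γ : Omega1A k q n →ₗ[k] SA k q n) {i : Fin q} (hi : i ≠ 0) :
    gval k q γ i ∈ SA k q n := by
  rw [gval, dif_neg hi]
  exact Subtype.coe_prop _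

lemma sigma_tau (γ : Omega1A k q n →ₗ[k] SA k q n) :
    (sigmaHom k q γ).comp (tauHom k q γ) = AlgHom.id k (Aqn k q n) := by
  refine algHom_ext' k q n ?_
  intro i
  rw [AlgHom.coe_comp, Function.comp_apply, AlgHom.coe_id, id_eq]
  rw [tauHom, descend_x, gp]
  by_cases hi : i = 0
  · rw [if_pos hi, sigmaHom_x1, hi]
  · rw [if_neg hi, map_add, sigmaHom, descend_x, gm, if_neg hi,
      fix_SA k q (by rw [← sigmaHom]; exact sigmaHom_x1 k q γ) (gval_mem_SA k q γ hi)]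
    ring

lemma tau_sigma (γ : Omega1A k q n →ₗ[k] SA k q n) :
    (tauHom k q γ).comp (sigmaHom k q γ) = AlgHom.id k (Aqn k q n) := by
  refine algHom_ext' k q n ?_
  intro i
  rw [AlgHom.coe_comp, Function.comp_apply, AlgHom.coe_id, id_eq]
  rw [sigmaHom, descend_x, gm]
  by_cases hi : i = 0
  · rw [if_pos hi, tauHom_x1, hi]
  · rw [if_neg hi, map_sub, tauHom, descend_x, gp, if_neg hi,
      fix_SA k q (by rw [← tauHom]; exact tauHom_x1 k q γ) (gval_mem_SA k q γ hi)]
    ring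

def sigmaEquiv (γ : Omega1A k q n →ₗ[k] SA k q n) : Aqn k q n ≃ₐ[k] Aqn k q n :=
  AlgEquiv.ofAlgHom (sigmaHom k q γ) (tauHom k q γ) (sigma_tau k q γ) (tau_sigma k q γ)

lemma sigmaEquiv_lin_triv (γ : Omega1A k q n →ₗ[k] SA k q n) (i : Fin q) :
    sigmaEquiv k q γ (xA k q n i) - xA k q n i ∈ (mA k q n) ^ 2 := by
  have : sigmaEquiv k q γ (xA k q n i) = gm k q γ i := by
    rw [sigmaEquiv]
    show sigmaHom k q γ (xA k q n i) = _
    rw [sigmaHom, descend_x]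
  rw [this, gm]
  by_cases hi : i = 0
  · rw [if_pos hi, hi, sub_self]
    exact Submodule.zero_mem _
  · rw [if_neg hi]
    have : xA k q n i - gval k q γ i - xA k q n i = -(gval k q γ i) := by ring
    rw [this]
    exact Submodule.neg_mem _ (SA_le_mA2 k q (gval_mem_SA k q γ hi))

lemma sigmaEquiv_map_q1 (γ : Omega1A k q n →ₗ[k] SA k q n) :
    Ideal.map (sigmaEquiv k q γ) (q1A k q n) = idealOfGamma k q n γ := by
  rw [q1A, Ideal.map_span, idealOfGamma]
  congr 1
  ext w
  constructor
  · rintro ⟨y, ⟨i, hi, rfl⟩, rfl⟩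
    refine ⟨⟨i, hi⟩, ?_⟩
    have : sigmaEquiv k q γ (xA k q n i) = gm k q γ i := by
      show sigmaHom k q γ (xA k q n i) = _
      rw [sigmaHom, descend_x]
    rw [this, gm, if_neg hi, gval, dif_neg hi]
  · rintro ⟨i, rfl⟩
    refine ⟨xA k q n i.1, ⟨i.1, i.2, rfl⟩, ?_⟩
    have : sigmaEquiv k q γ (xA k q n i.1) = gm k q γ i.1 := by
      show sigmaHom k q γ (xA k q n i.1) = _
      rw [sigmaHom, descend_x]
    rw [this, gm, if_neg i.2, gval, dif_neg i.2]

end Sigma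

section Reverse

variable {n}

lemma equiv_mem_mA (hn : 2 ≤ n) (σ : Aqn k q n ≃ₐ[k] Aqn k q n) {a : Aqn k q n}
    (ha : a ∈ mA k q n) : σ a ∈ mA k q n := by
  have hnil := mA_eq_nilradical k q n (by omega)
  rw [hnil] at ha ⊢
  exact (mem_nilradical.mp ha).map σ

lemma equiv_mem_mA2 (hn : 2 ≤ n) (σ : Aqn k q n ≃ₐ[k] Aqn k q n) {a : Aqn k q n}
    (ha : a ∈ (mA k q n) ^ 2) : σ a ∈ (mA k q n) ^ 2 := by
  rw [pow_two] at ha ⊢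
  refine Submodule.mul_induction_on (C := fun z => σ z ∈ mA k q n * mA k q n) ha ?_ ?_
  · intro x hx y hy
    rw [_root_.map_mul]
    exact Ideal.mul_mem_mul (equiv_mem_mA k q hn σ hx) (equiv_mem_mA k q hn σ hy)
  · intro x y hx hy
    rw [map_add]
    exact Submodule.add_mem _ hx hy

lemma symm_lin_triv (hn : 2 ≤ n) (σ : Aqn k q n ≃ₐ[k] Aqn k q n)
    (hσ : ∀ i, σ (xA k q n i) - xA k q n i ∈ (mA k q n) ^ 2) (i : Fin q) :
    σ.symm (xA k q n i) - xA k q n i ∈ (mA k q n) ^ 2 := by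
  have key : σ.symm (xA k q n i) - xA k q n i
      = -(σ.symm (σ (xA k q n i) - xA k q n i)) := by
    rw [map_sub, AlgEquiv.symm_apply_apply]
    ring
  rw [key]
  exact Submodule.neg_mem _ (equiv_mem_mA2 k q hn σ.symm (hσ i))

lemma main_reverse (hn : 2 ≤ n) (σ : Aqn k q n ≃ₐ[k] Aqn k q n)
    (hσ : ∀ i, σ (xA k q n i) - xA k q n i ∈ (mA k q n) ^ 2) :
    ∃ γ : Omega1A k q n →ₗ[k] SA k q n,
      idealOfGamma k q n γ = Ideal.map σ (q1A k q n) := by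
  set τ := σ.symm with hτ
  set y := τ (xA k q n 0) with hy0
  have hy : y - xA k q n 0 ∈ (mA k q n) ^ 2 := symm_lin_triv k q hn σ hσ 0
  have hymem : y ∈ mA k q n := equiv_mem_mA k q hn τ (xA_mem_mA k q n 0)
  -- decompose τ(x_i)
  have hti : ∀ i : {i : Fin q // i ≠ 0}, τ (xA k q n i.1)
      ∈ YTsub k q n y 2 ⊔ Submodule.restrictScalars k (q1A' k q n) := by
    intro i
    have h1 : τ (xA k q n i.1) - xA k q n i.1 ∈ Tsub k q n 2 ⊔ QQ k q n :=
      powLe k q 2 le_rfl _ (symm_lin_triv k q hn σ hσ i.1)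
    have h2 : Tsub k q n 2 ⊔ QQ k q n
        ≤ YTsub k q n y 2 ⊔ Submodule.restrictScalars k (q1A' k q n) := by
      refine sup_le ?_ (le_trans (QQ_le_q1 k q n) le_sup_right)
      rw [Tsub]
      refine Submodule.span_le.mpr ?_
      rintro w ⟨l, hl, rfl⟩
      exact sup_le_sup (YTsub_mono k q n hl) le_rfl
        (x1pow_mem_YT k q hn hy (by omega))
    have h3 : τ (xA k q n i.1)
        = (τ (xA k q n i.1) - xA k q n i.1) + xA k q n i.1 := by ring
    rw [h3]
    exact Submodule.add_mem _ (h2 h1)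
      (Submodule.mem_sup_right (xA_mem_q1 k q n i.2))
  choose w hw r hr heq using fun i => Submodule.mem_sup.mp (hti i)
  -- s i := σ (w i) lands in SA
  have hsS : ∀ i, σ (w i) ∈ SA k q n := by
    intro i
    refine Submodule.span_induction (p := fun w _ => σ w ∈ SA k q n) ?_ ?_ ?_ ?_ (hw i)
    · rintro v ⟨l, hl2, hln, rfl⟩
      show σ (y ^ l) ∈ SA k q n
      rw [map_pow, hy0, hτ, AlgEquiv.apply_symm_apply]
      rw [SA_eq_span]
      exact Submodule.subset_span ⟨l, hl2, hln, rfl⟩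
    · show σ 0 ∈ SA k q n
      rw [map_zero]; exact Submodule.zero_mem _
    · intro a b ha' hb' ha hb
      show σ (a + b) ∈ SA k q n
      have ha : σ a ∈ SA k q n := ha
      have hb : σ b ∈ SA k q n := hb
      rw [map_add]; exact Submodule.add_mem _ ha hb
    · intro c a ha' ha
      show σ (c • a) ∈ SA k q n
      have ha : σ a ∈ SA k q n := ha
      rw [map_smul]; exact Submodule.smul_mem _ c ha
  set γ : Omega1A k q n →ₗ[k] SA k q n :=
    (basisOmega k q hn).constr k (fun i => (⟨σ (w i), hsS i⟩ : SA k q n)) with hγdef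
  have hγ : ∀ i : {i : Fin q // i ≠ 0},
      (γ ⟨xA k q n i.1, Submodule.subset_span ⟨i.1, i.2, rfl⟩⟩ : Aqn k q n) = σ (w i) := by
    intro i
    rw [← basisOmega_eq k q hn i, hγdef, Module.Basis.constr_basis]
  -- generators equal σ (r i)
  have hgen : ∀ i : {i : Fin q // i ≠ 0},
      xA k q n i.1 - (γ ⟨xA k q n i.1, Submodule.subset_span ⟨i.1, i.2, rfl⟩⟩ : Aqn k q n)
        = σ (r i) := by
    intro i
    rw [hγ i]
    have : xA k q n i.1 = σ (τ (xA k q n i.1)) := by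
      rw [hτ, AlgEquiv.apply_symm_apply]
    rw [this, ← map_sub]
    congr 1
    rw [← heq i]
    ring
  refine ⟨γ, le_antisymm ?_ ?_⟩
  · -- idealOfGamma γ ≤ map σ q1A
    rw [idealOfGamma]
    refine Ideal.span_le.mpr ?_
    rintro v ⟨i, rfl⟩
    rw [SetLike.mem_coe, hgen i]
    exact Ideal.mem_map_of_mem _ (hr i)
  · -- map σ q1A ≤ idealOfGamma γ
    rw [Ideal.map_le_iff_le_comap]
    rw [← q1A'_eq]
    refine nakayama k q (Ideal.comap σ (idealOfGamma k q n γ)) ?_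
    rw [q1A']
    refine Ideal.span_le.mpr ?_
    rintro v ⟨i, hi, rfl⟩
    rw [SetLike.mem_coe]
    set i' : {i : Fin q // i ≠ 0} := ⟨i, hi⟩ with hi'
    have hrmem : r i' ∈ Ideal.comap σ (idealOfGamma k q n γ) := by
      rw [Ideal.mem_comap, ← hgen i']
      exact gen_mem_idealOfGamma k q γ i'
    have hemem : xA k q n i - r i' ∈ QQ k q n := by
      have he2 : xA k q n i - r i' ∈ (mA k q n) ^ 2 := by
        have hxw : xA k q n i - r i' = -(τ (xA k q n i) - xA k q n i) + w i' := by
          have := heq i'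
          simp only [hi'] at this ⊢
          rw [← this]
          ring
        rw [hxw]
        refine Submodule.add_mem _
          (Submodule.neg_mem _ (symm_lin_triv k q hn σ hσ i)) ?_
        -- w i' ∈ YTsub ≤ mA^2
        refine Submodule.span_induction
          (p := fun v _ => v ∈ Submodule.restrictScalars k ((mA k q n)^2)) ?_ ?_ ?_ ?_ (hw i')
        · rintro v ⟨l, hl2, hln, rfl⟩
          have h1 : y ^ l ∈ (mA k q n) ^ l := Ideal.pow_mem_pow hymem l
          exact Ideal.pow_le_pow_right hl2 h1
        · exact Submodule.zero_mem _
        · intro a b _ _ ha hb; exact Submodule.add_mem _ ha hb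
        · intro c a _ ha; exact Submodule.smul_mem _ c ha
      have heq1 : xA k q n i - r i' ∈ q1A' k q n :=
        Submodule.sub_mem _ (xA_mem_q1 k q n hi) (hr i')
      have hTQ : xA k q n i - r i' ∈ Tsub k q n 2 ⊔ QQ k q n :=
        powLe k q 2 le_rfl _ he2
      obtain ⟨t, ht, u, hu, htu⟩ := Submodule.mem_sup.mp hTQ
      have ht0 : t = 0 := by
        refine SA_inter_q1A k q ?_ ?_
        · rw [← Tsub2_eq_SA]; exact ht
        · have : t = (xA k q n i - r i') - u := by rw [← htu]; ring
          rw [this, q1A'_eq] at *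
          exact Submodule.sub_mem _ heq1 (QQ_le_q1 k q n hu)
      rw [← htu, ht0, zero_add]
      exact hu
    have : xA k q n i = r i' + (xA k q n i - r i') := by ring
    rw [this]
    exact Submodule.add_mem _ (Submodule.mem_sup_left hrmem)
      (Submodule.mem_sup_right hemem)

end Reverse

end Step17

/-- `γ ↦ (x_2 - γ(x_2), …, x_q - γ(x_q))` is an injective map from
`Hom_k(Ω_1, S)` to ideals of `A_{q,n}`, whose image is exactly the orbit of the ideal
`q_1` under the group `I_{q,n}` of linearly trivial automorphisms. -/
theorem idealOfGamma_injective_range_orbit (k : Type) [Field k] (q n : ℕ) [NeZero q]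
    (hq : 2 ≤ q) (hn : 2 ≤ n) :
    Function.Injective (idealOfGamma k q n) ∧
    Set.range (idealOfGamma k q n) =
      {J : Ideal (Aqn k q n) | ∃ σ : Aqn k q n ≃ₐ[k] Aqn k q n,
        (∀ i, σ (xA k q n i) - xA k q n i ∈ (mA k q n) ^ 2) ∧
        J = Ideal.map σ (q1A k q n)} := by
  constructor
  · exact Step17.idealOfGamma_inj k q hn
  · ext J
    simp only [Set.mem_range, Set.mem_setOf_eq]
    constructor
    · rintro ⟨γ, rfl⟩
      exact ⟨Step17.sigmaEquiv k q γ, Step17.sigmaEquiv_lin_triv k q γ,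
        (Step17.sigmaEquiv_map_q1 k q γ).symm⟩
    · rintro ⟨σ, hσ, rfl⟩
      obtain ⟨γ, hγ⟩ := Step17.main_reverse k q hn σ hσ
      exact ⟨γ, hγ⟩
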